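/- Fix an integer c and positive integers q, r. The number of pairs (a,b) with 1 ≤ a ≤ q, 1 ≤ b ≤ r, gcd(a,q) = 1, gcd(b,r) = 1, and a r − b q = c is at most φ(gcd(q,r)). -/

import Mathlib

open Finset

private lemma aux_coprime (n x : ℕ) (hn : 0 < n) :
    Nat.Coprime (n / Nat.gcd n (x ^ n)) x := by
  rcases Nat.eq_zero_or_pos x with rfl | hx
  · rw [zero_pow hn.ne', Nat.gcd_zero_right, Nat.div_self hn]
    exact Nat.coprime_one_left _
  by_contra h
  obtain ⟨p, hp, hpd, hpx⟩ := Nat.Prime.not_coprime_iff_dvd.mp h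
  have hp' : p.Prime := hp
  set g := Nat.gcd n (x ^ n) with hg
  have hgn : g ∣ n := Nat.gcd_dvd_left _ _
  have hgx : g ∣ x ^ n := Nat.gcd_dvd_right _ _
  have hg0 : 0 < g := Nat.gcd_pos_of_pos_left _ hn
  have h1 : p * g ∣ n := by
    rw [mul_comm]; exact Nat.mul_dvd_of_dvd_div hgn hpd
  have hxn0 : x ^ n ≠ 0 := pow_ne_zero _ hx.ne'
  have h2 : p * g ∣ x ^ n := by
    rw [← Nat.factorization_le_iff_dvd (Nat.mul_pos hp'.pos hg0).ne' hxn0]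
    rw [Finsupp.le_def]
    intro l
    rw [Nat.factorization_mul hp'.pos.ne' hg0.ne', Nat.Prime.factorization hp']
    simp only [Finsupp.coe_add, Pi.add_apply]
    rcases eq_or_ne l p with rfl | hl
    · have e1 : g.factorization l ≤ n.factorization l :=
        (Nat.factorization_le_iff_dvd hg0.ne' hn.ne').mpr hgn l
      have e2 : n.factorization l < n := Nat.factorization_lt l hn.ne'
      have e3 : 1 ≤ x.factorization l := hp'.factorization_pos_of_dvd hx.ne' hpx
      rw [Nat.factorization_pow]
      simp only [Finsupp.smul_apply, smul_eq_mul, Finsupp.single_eq_same]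
      nlinarith
    · rw [Finsupp.single_eq_of_ne' (Ne.symm hl)]
      have := (Nat.factorization_le_iff_dvd hg0.ne' hxn0).mpr hgx l
      omega
  have h3 : p * g ∣ g := Nat.dvd_gcd h1 h2
  have := Nat.le_of_dvd hg0 h3
  nlinarith [hp'.two_le]

theorem stmt18 (q r : ℕ) (hq : 0 < q) (hr : 0 < r) (c : ℤ) :
    (((Finset.Icc 1 q) ×ˢ (Finset.Icc 1 r)).filter (fun ab : ℕ × ℕ =>
        Nat.gcd ab.1 q = 1 ∧ Nat.gcd ab.2 r = 1 ∧
        (ab.1 : ℤ) * (r : ℤ) - (ab.2 : ℤ) * (q : ℤ) = c)).card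
      ≤ Nat.totient (Nat.gcd q r) := by
  set d := Nat.gcd q r with hd
  have hd0 : 0 < d := Nat.gcd_pos_of_pos_left _ hq
  set q1 := q / d with hq1
  set r1 := r / d with hr1
  have hq1d : d * q1 = q := Nat.mul_div_cancel' (Nat.gcd_dvd_left q r)
  have hr1d : d * r1 = r := Nat.mul_div_cancel' (Nat.gcd_dvd_right q r)
  have hq10 : 0 < q1 := Nat.pos_of_ne_zero (by
    intro h0; rw [h0, mul_zero] at hq1d; omega)
  have hcop : Nat.Coprime q1 r1 := Nat.coprime_div_gcd_div_gcd hd0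
  set d2 := Nat.gcd d (q1 ^ d) with hd2
  have hd2d : d2 ∣ d := Nat.gcd_dvd_left _ _
  set d1 := d / d2 with hd1
  have hC1 : Nat.Coprime d1 q1 := aux_coprime d q1 hd0
  have hd20 : 0 < d2 := Nat.gcd_pos_of_pos_left _ hd0
  have hdd : d1 * d2 = d := Nat.div_mul_cancel hd2d
  have hd10 : 0 < d1 := Nat.pos_of_ne_zero (by
    intro h0; rw [h0, zero_mul] at hdd; omega)
  have hC2 : Nat.Coprime d2 r1 :=
    Nat.Coprime.coprime_dvd_left (Nat.gcd_dvd_right d _) (Nat.Coprime.pow_left d hcop)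
  have hC12 : Nat.Coprime d1 d2 :=
    Nat.Coprime.coprime_dvd_right (Nat.gcd_dvd_right d _) (hC1.pow_right d)
  have hd1q : d1 ∣ q := dvd_trans (Dvd.intro d2 hdd) ⟨q1, hq1d.symm⟩
  have hd2r : d2 ∣ r := dvd_trans hd2d ⟨r1, hr1d.symm⟩
  -- target finset
  set T1 := (range d1).filter d1.Coprime with hT1
  set T2 := (range d2).filter d2.Coprime with hT2
  have key : (((Finset.Icc 1 q) ×ˢ (Finset.Icc 1 r)).filter (fun ab : ℕ × ℕ =>
        Nat.gcd ab.1 q = 1 ∧ Nat.gcd ab.2 r = 1 ∧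
        (ab.1 : ℤ) * (r : ℤ) - (ab.2 : ℤ) * (q : ℤ) = c)).card ≤ (T1 ×ˢ T2).card := by
    apply Finset.card_le_card_of_injOn (fun ab => (ab.1 % d1, ab.2 % d2))
    · rintro ⟨a, b⟩ hab
      simp only [Finset.mem_coe, Finset.mem_filter, Finset.mem_product, Finset.mem_Icc] at hab
      obtain ⟨⟨⟨ha1, ha2⟩, hb1, hb2⟩, hga, hgb, heq⟩ := hab
      simp only [Finset.mem_coe, hT1, hT2, Finset.mem_product, Finset.mem_filter, Finset.mem_range]
      refine ⟨⟨Nat.mod_lt _ hd10, ?_⟩, Nat.mod_lt _ hd20, ?_⟩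
      · have : Nat.Coprime a d1 := Nat.Coprime.coprime_dvd_right hd1q hga
        have := Nat.Coprime.gcd_eq_one this
        unfold Nat.Coprime
        rw [Nat.gcd_comm, Nat.gcd_rec d1 a] at *
        exact this
      · have : Nat.Coprime b d2 := Nat.Coprime.coprime_dvd_right hd2r hgb
        have := Nat.Coprime.gcd_eq_one this
        unfold Nat.Coprime
        rw [Nat.gcd_comm, Nat.gcd_rec d2 b] at *
        exact this
    · rintro ⟨a, b⟩ hab ⟨a', b'⟩ hab' heq2
      simp only [Finset.coe_filter, Set.mem_setOf_eq, Finset.mem_product, Finset.mem_Icc] at hab hab'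
      obtain ⟨⟨⟨ha1, ha2⟩, hb1, hb2⟩, hga, hgb, heq⟩ := hab
      obtain ⟨⟨⟨ha1', ha2'⟩, hb1', hb2'⟩, hga', hgb', heq'⟩ := hab'
      simp only [Prod.mk.injEq] at heq2
      obtain ⟨hma, hmb⟩ := heq2
      have hda : (d1 : ℤ) ∣ (a' : ℤ) - a := (Nat.ModEq.dvd hma)
      have hdb : (d2 : ℤ) ∣ (b' : ℤ) - b := (Nat.ModEq.dvd hmb)
      have hqz : (q : ℤ) = (d : ℤ) * q1 := by exact_mod_cast hq1d.symm
      have hrz : (r : ℤ) = (d : ℤ) * r1 := by exact_mod_cast hr1d.symm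
      have e0 : ((a : ℤ) - a') * r = ((b : ℤ) - b') * q := by linarith
      have e1 : ((a : ℤ) - a') * r1 = ((b : ℤ) - b') * q1 := by
        have hdz : (d : ℤ) ≠ 0 := by exact_mod_cast hd0.ne'
        apply mul_left_cancel₀ hdz
        rw [hqz, hrz] at e0
        ring_nf at e0 ⊢
        linarith
      have hq1dvd : (q1 : ℤ) ∣ (a : ℤ) - a' := by
        have hc : IsCoprime (q1 : ℤ) (r1 : ℤ) := Nat.isCoprime_iff_coprime.mpr hcop
        exact hc.dvd_of_dvd_mul_right ⟨(b : ℤ) - b', by rw [e1]; ring⟩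
      obtain ⟨s, hs⟩ := hq1dvd
      have hb' : (b : ℤ) - b' = r1 * s := by
        have hq1z : (q1 : ℤ) ≠ 0 := by exact_mod_cast hq10.ne'
        apply mul_left_cancel₀ hq1z
        rw [hs] at e1
        ring_nf at e1 ⊢
        linarith
      have hd1s : (d1 : ℤ) ∣ s := by
        have hc : IsCoprime (d1 : ℤ) (q1 : ℤ) := Nat.isCoprime_iff_coprime.mpr hC1
        have : (d1 : ℤ) ∣ q1 * s := by rw [← hs]; exact dvd_sub_comm.mp hda
        exact hc.dvd_of_dvd_mul_left this
      have hd2s : (d2 : ℤ) ∣ s := by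
        have hc : IsCoprime (d2 : ℤ) (r1 : ℤ) := Nat.isCoprime_iff_coprime.mpr hC2
        have : (d2 : ℤ) ∣ r1 * s := by rw [← hb']; exact dvd_sub_comm.mp hdb
        exact hc.dvd_of_dvd_mul_left this
      have hds : (d : ℤ) ∣ s := by
        have hc : IsCoprime (d1 : ℤ) (d2 : ℤ) := Nat.isCoprime_iff_coprime.mpr hC12
        have := hc.mul_dvd hd1s hd2s
        have hcast : ((d1 : ℤ) * d2) = (d : ℤ) := by exact_mod_cast hdd
        rwa [hcast] at this
      have hqdvd : (q : ℤ) ∣ (a : ℤ) - a' := by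
        obtain ⟨t, ht⟩ := hds
        exact ⟨t, by rw [hs, ht, hqz]; ring⟩
      have haa : (a : ℤ) - a' = 0 := by
        apply Int.eq_zero_of_abs_lt_dvd hqdvd
        rw [abs_sub_lt_iff]
        constructor <;> [skip; skip] <;>
          · push_cast
            omega
      have haeq : a = a' := by omega
      have hbeq : b = b' := by
        have : ((b : ℤ) - b') * q = 0 := by rw [← e0, haa]; ring
        have hqz0 : (q : ℤ) ≠ 0 := by exact_mod_cast hq.ne'
        have := mul_eq_zero.mp this
        rcases this with h | h
        · omega
        · exact absurd h hqz0
      simp [haeq, hbeq]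
  refine key.trans ?_
  rw [Finset.card_product]
  have h1 : T1.card = Nat.totient d1 := rfl
  have h2 : T2.card = Nat.totient d2 := rfl
  rw [h1, h2, ← Nat.totient_mul hC12, hdd]
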